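/- Deterministic variance bound for kernel ridgeless regression: for any X ∈ ℝ^{n×d}, any positive semidefinite Σ ∈ ℝ^{d×d} with eigenvalues λ_1 ≥ ... ≥ λ_d, any γ > 0, and any k < d, if n ≤ c·d for an absolute constant c then tr((XX^T + dγ I_n)^{-2} X Σ X^T) ≤ (C/γ)·(λ_1 k / n + λ_{k+1}) for an absolute constant C. -/

import Mathlib

open Matrix

private lemma key_diag {n : ℕ} (r : ℝ) (w y : Fin n → ℝ) :
    4 * r * (y ⬝ᵥ w) ≤ (w + r • y) ⬝ᵥ (w + r • y) := by
  have h0 : (0:ℝ) ≤ (w - r • y) ⬝ᵥ (w - r • y) :=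
    Finset.sum_nonneg fun i _ => mul_self_nonneg _
  have e : (w + r • y) ⬝ᵥ (w + r • y)
      = (w - r • y) ⬝ᵥ (w - r • y) + 4 * r * (y ⬝ᵥ w) := by
    simp only [dotProduct, Pi.add_apply, Pi.sub_apply, Pi.smul_apply, smul_eq_mul,
      Finset.mul_sum, ← Finset.sum_add_distrib]
    exact Finset.sum_congr rfl fun i _ => by ring
  linarith

private lemma key_col {n d : ℕ} (X : Matrix (Fin n) (Fin d) ℝ) (r : ℝ) (hr : 0 < r)
    (u : Fin d → ℝ) (hu : u ⬝ᵥ u = 1) (y : Fin n → ℝ)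
    (hy : (X * Xᵀ) *ᵥ y + r • y = X *ᵥ u) : y ⬝ᵥ y ≤ 1 / (4 * r) := by
  set z := y ᵥ* X with hz
  have h1 : (X * Xᵀ) *ᵥ y = X *ᵥ z := by rw [← mulVec_mulVec, mulVec_transpose]
  have h3 : z ⬝ᵥ z + r * (y ⬝ᵥ y) = z ⬝ᵥ u := by
    have hdy := congrArg (fun v => y ⬝ᵥ v) hy
    simp only [dotProduct_add, dotProduct_smul, smul_eq_mul] at hdy
    rw [h1, dotProduct_mulVec, dotProduct_mulVec] at hdy
    exact hdy
  have hcs : (z ⬝ᵥ u)^2 ≤ (z ⬝ᵥ z) * (u ⬝ᵥ u) := by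
    have := Finset.sum_mul_sq_le_sq_mul_sq Finset.univ z u
    simpa [dotProduct, sq] using this
  rw [hu, mul_one] at hcs
  have hz0 : 0 ≤ z ⬝ᵥ z := Finset.sum_nonneg fun i _ => mul_self_nonneg _
  have hy0 : 0 ≤ y ⬝ᵥ y := Finset.sum_nonneg fun i _ => mul_self_nonneg _
  rw [le_div_iff₀ (by positivity)]
  nlinarith [hcs, h3, hz0, hy0, hr, sq_nonneg (z ⬝ᵥ z - 1/4),
    mul_nonneg hr.le hy0, mul_nonneg hz0 (mul_nonneg hr.le hy0)]

set_option maxHeartbeats 1000000 in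
theorem kernel_ridgeless_variance_bound :
    ∃ c C : ℝ, 0 < c ∧ 0 < C ∧
      ∀ (n d : ℕ) (hn : 0 < n) (hnd : (n : ℝ) ≤ c * d)
        (X : Matrix (Fin n) (Fin d) ℝ)
        (S : Matrix (Fin d) (Fin d) ℝ) (hS : S.PosSemidef)
        (lam : Fin d → ℝ) (hmono : Antitone lam) (hnonneg : ∀ i, 0 ≤ lam i)
        (u : Fin d → Fin d → ℝ)
        (horth : ∀ i j, u i ⬝ᵥ u j = if i = j then (1 : ℝ) else 0)
        (heig : ∀ i, S.mulVec (u i) = lam i • u i)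
        (γ : ℝ) (hγ : 0 < γ) (k : ℕ) (hk : k < d),
        Matrix.trace
            ((X * Xᵀ + ((d : ℝ) * γ) • (1 : Matrix (Fin n) (Fin n) ℝ))⁻¹ *
              (X * Xᵀ + ((d : ℝ) * γ) • (1 : Matrix (Fin n) (Fin n) ℝ))⁻¹ *
              X * S * Xᵀ)
          ≤ C / γ * (lam ⟨0, Nat.lt_of_le_of_lt (Nat.zero_le k) hk⟩ * k / n
              + lam ⟨k, hk⟩) := by
  refine ⟨1, 1, one_pos, one_pos, ?_⟩
  intro n d hn hnd X S hS lam hmono hnonneg u horth heig γ hγ k hk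
  rw [one_mul] at hnd
  have hd : 0 < d := Nat.lt_of_le_of_lt (Nat.zero_le k) hk
  have hdR : (0:ℝ) < d := by exact_mod_cast hd
  have hnR : (0:ℝ) < n := by exact_mod_cast hn
  set r : ℝ := (d:ℝ) * γ with hr_def
  have hr : 0 < r := mul_pos hdR hγ
  set M : Matrix (Fin n) (Fin n) ℝ := X * Xᵀ with hM_def
  set A : Matrix (Fin n) (Fin n) ℝ := M + r • 1 with hA_def
  have hMpsd : M.PosSemidef := posSemidef_self_mul_conjTranspose X
  have hApd : A.PosDef := Matrix.PosDef.posSemidef_add hMpsd (by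
    rw [smul_one_eq_diagonal]; exact .diagonal fun _ => hr)
  have hAdet : IsUnit A.det := (Matrix.isUnit_iff_isUnit_det A).mp hApd.isUnit
  have hAA : A * A⁻¹ = 1 := A.mul_nonsing_inv hAdet
  have hMsymm : Mᵀ = M := by rw [hM_def, transpose_mul, transpose_transpose]
  have hAsymm : Aᵀ = A := by rw [hA_def, transpose_add, hMsymm, transpose_smul, transpose_one]
  have hAisymm : (A⁻¹)ᵀ = A⁻¹ := by rw [transpose_nonsing_inv, hAsymm]
  set U : Matrix (Fin d) (Fin d) ℝ := Matrix.of u with hU_def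
  have hUUt : U * Uᵀ = 1 := by
    ext i j
    simpa [hU_def, Matrix.mul_apply, Matrix.one_apply, dotProduct] using horth i j
  have hUtU : Uᵀ * U = 1 := mul_eq_one_comm.mp hUUt
  have hSdec : S = Uᵀ * diagonal lam * U := by
    have h1 : S * Uᵀ = Uᵀ * diagonal lam := by
      ext i j
      have h2 := congrFun (heig j) i
      simp only [Matrix.mulVec, dotProduct, Pi.smul_apply, smul_eq_mul] at h2
      rw [Matrix.mul_diagonal, Matrix.mul_apply]
      simp only [Matrix.transpose_apply, Matrix.of_apply, hU_def]
      exact h2.trans (mul_comm _ _)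
    calc S = S * (Uᵀ * U) := by rw [hUtU, mul_one]
    _ = (S * Uᵀ) * U := by rw [Matrix.mul_assoc]
    _ = Uᵀ * diagonal lam * U := by rw [h1]
  set W : Matrix (Fin n) (Fin d) ℝ := A⁻¹ * X * Uᵀ with hW_def
  have hWt : Wᵀ = U * (Xᵀ * A⁻¹) := by
    rw [hW_def, transpose_mul, transpose_mul, transpose_transpose, hAisymm]
  -- the trace as a weighted sum of column norms of W
  have htr : Matrix.trace (A⁻¹ * A⁻¹ * X * S * Xᵀ)
      = ∑ i, lam i * (∑ j, (W j i)^2) := by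
    have h0 : A⁻¹ * A⁻¹ * X * S * Xᵀ = A⁻¹ * (A⁻¹ * X * S * Xᵀ) := by
      simp only [Matrix.mul_assoc]
    rw [h0, Matrix.trace_mul_comm]
    have h1 : A⁻¹ * X * S * Xᵀ * A⁻¹ = W * diagonal lam * Wᵀ := by
      rw [hSdec, hW_def, hWt]
      simp only [Matrix.mul_assoc]
    rw [h1, Matrix.trace_mul_cycle]
    have gen : ∀ N : Matrix (Fin d) (Fin d) ℝ,
        Matrix.trace (N * diagonal lam) = ∑ i, N i i * lam i := fun N => by
      simp [Matrix.trace, Matrix.diag, Matrix.mul_apply, Matrix.diagonal]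
    rw [gen (Wᵀ * W)]
    refine Finset.sum_congr rfl fun i _ => ?_
    rw [Matrix.mul_apply, Finset.sum_mul, Finset.mul_sum]
    exact Finset.sum_congr rfl fun j _ => by simp only [Matrix.transpose_apply, sq]; ring
  rw [htr]
  -- column norms
  have hAW : A * W = X * Uᵀ := by
    rw [hW_def, ← Matrix.mul_assoc, ← Matrix.mul_assoc, hAA, Matrix.one_mul]
  have hcolA : ∀ i : Fin d, A *ᵥ (fun j => W j i) = X *ᵥ u i := by
    intro i
    have h1 : (fun j => W j i) = W *ᵥ Pi.single i 1 := by
      ext j; simp [Matrix.mulVec_single]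
    rw [h1, mulVec_mulVec, hAW]
    ext j
    simp only [Matrix.mulVec, Matrix.mul_apply, dotProduct, Matrix.transpose_apply,
      Matrix.of_apply, hU_def]
    rw [Finset.sum_eq_single i (fun b _ hb => by simp [Pi.single_eq_of_ne hb]) (by simp)]
    simp
  have hcol : ∀ i : Fin d, (∑ j, (W j i)^2) ≤ 1 / (4 * r) := by
    intro i
    have hyA : M *ᵥ (fun j => W j i) + r • (fun j => W j i) = X *ᵥ u i := by
      rw [← hcolA i, hA_def, add_mulVec, smul_mulVec, one_mulVec]
    have h := key_col X r hr (u i) (by simpa using horth i i) (fun j => W j i) hyA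
    simpa [dotProduct, sq] using h
  have hcolnn : ∀ i : Fin d, 0 ≤ ∑ j, (W j i)^2 :=
    fun i => Finset.sum_nonneg fun j _ => sq_nonneg _
  -- total sum of squares
  have htotal : (∑ i, ∑ j, (W j i)^2) ≤ (n : ℝ) / (4 * r) := by
    rw [Finset.sum_comm]
    have hrow : ∀ j : Fin n, (∑ i, (W j i)^2) ≤ 1 / (4 * r) := by
      intro j
      set y : Fin n → ℝ := fun a => A⁻¹ j a with hy_def
      have hsym : ∀ a b, A⁻¹ a b = A⁻¹ b a := by
        intro a b
        conv_lhs => rw [← hAisymm]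
        rw [Matrix.transpose_apply]
      have hAy : A *ᵥ y = Pi.single j 1 := by
        have h1 : y = A⁻¹ *ᵥ Pi.single j 1 := by
          ext a; simp [Matrix.mulVec_single, hy_def, hsym j a]
        rw [h1, mulVec_mulVec, hAA, one_mulVec]
      have hkey := key_diag r (M *ᵥ y) y
      have hMy : M *ᵥ y + r • y = A *ᵥ y := by
        rw [hA_def, add_mulVec, smul_mulVec, one_mulVec]
      rw [hMy, hAy] at hkey
      have hone : (Pi.single j 1 : Fin n → ℝ) ⬝ᵥ Pi.single j 1 = 1 := by
        simp [dotProduct, Pi.single_apply]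
      rw [hone] at hkey
      -- ∑ i, (W j i)^2 = y ⬝ᵥ (M *ᵥ y)
      have hWW : (∑ i, (W j i)^2) = y ⬝ᵥ (M *ᵥ y) := by
        have hWWt : W * Wᵀ = A⁻¹ * (M * A⁻¹) := by
          rw [hW_def, hWt, hM_def]
          simp only [Matrix.mul_assoc]
          rw [← Matrix.mul_assoc Uᵀ U, hUtU, Matrix.one_mul]
        have h2 : (∑ i, (W j i)^2) = (W * Wᵀ) j j := by
          rw [Matrix.mul_apply]
          exact Finset.sum_congr rfl fun i _ => by simp [sq]
        have hMs : ∀ a b, M a b = M b a := by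
          intro a b
          conv_lhs => rw [← hMsymm]
          rw [Matrix.transpose_apply]
        rw [h2, hWWt]
        simp only [Matrix.mul_apply, Matrix.mulVec, dotProduct, hy_def, Finset.mul_sum]
        rw [Finset.sum_comm]
        refine Finset.sum_congr rfl fun a _ => Finset.sum_congr rfl fun b _ => ?_
        rw [hMs b a, hsym a j]
        ring
      rw [hWW, le_div_iff₀ (by positivity : (0:ℝ) < 4*r)]
      calc (y ⬝ᵥ M *ᵥ y) * (4*r) = 4*r*(y ⬝ᵥ M *ᵥ y) := by ring
      _ ≤ 1 := hkey
    calc (∑ j : Fin n, ∑ i, (W j i)^2) ≤ ∑ j : Fin n, 1 / (4*r) :=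
          Finset.sum_le_sum fun j _ => hrow j
    _ = (n : ℝ) / (4 * r) := by simp [Finset.sum_const]; ring
  -- split head and tail
  set a := lam ⟨0, Nat.lt_of_le_of_lt (Nat.zero_le k) hk⟩ with ha_def
  set b := lam ⟨k, hk⟩ with hb_def
  have ha0 : 0 ≤ a := hnonneg _
  have hb0 : 0 ≤ b := hnonneg _
  set T : Finset (Fin d) := Finset.univ.filter (fun i : Fin d => (i:ℕ) < k) with hT_def
  have hcard : (T.card : ℝ) ≤ (k : ℝ) := by
    have h1 : T.card ≤ (Finset.range k).card := by
      apply Finset.card_le_card_of_injOn (fun i : Fin d => (i : ℕ))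
      · intro i hi
        have hi' : (i:ℕ) < k := by simpa [hT_def] using hi
        simpa using hi'
      · intro i _ j _ hij
        exact Fin.val_injective hij
    rw [Finset.card_range] at h1
    exact_mod_cast h1
  have hsplit := Finset.sum_filter_add_sum_filter_not Finset.univ
    (fun i : Fin d => (i:ℕ) < k) (fun i => lam i * (∑ j, (W j i)^2))
  have hhead : (∑ i ∈ T, lam i * (∑ j, (W j i)^2)) ≤ (T.card : ℝ) * (a * (1/(4*r))) := by
    calc (∑ i ∈ T, lam i * (∑ j, (W j i)^2)) ≤ ∑ i ∈ T, a * (1/(4*r)) := by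
          refine Finset.sum_le_sum fun i _ => ?_
          have hla : lam i ≤ a := hmono (by simp [Fin.le_def])
          have := hcol i
          have := hcolnn i
          have := hnonneg i
          nlinarith
    _ = (T.card : ℝ) * (a * (1/(4*r))) := by rw [Finset.sum_const, nsmul_eq_mul]
  have htail : (∑ i ∈ Finset.univ.filter (fun i : Fin d => ¬ (i:ℕ) < k),
      lam i * (∑ j, (W j i)^2)) ≤ b * ((n:ℝ)/(4*r)) := by
    calc (∑ i ∈ Finset.univ.filter (fun i : Fin d => ¬ (i:ℕ) < k),
          lam i * (∑ j, (W j i)^2))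
        ≤ ∑ i ∈ Finset.univ.filter (fun i : Fin d => ¬ (i:ℕ) < k),
          b * (∑ j, (W j i)^2) := by
          refine Finset.sum_le_sum fun i hi => ?_
          rw [Finset.mem_filter] at hi
          have hki : (⟨k, hk⟩ : Fin d) ≤ i := by
            simp [Fin.le_def]; omega
          exact mul_le_mul_of_nonneg_right (hmono hki) (hcolnn i)
    _ ≤ ∑ i : Fin d, b * (∑ j, (W j i)^2) := by
          refine Finset.sum_le_sum_of_subset_of_nonneg (Finset.filter_subset _ _)
            fun i _ _ => mul_nonneg hb0 (hcolnn i)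
    _ = b * ∑ i, ∑ j, (W j i)^2 := by rw [Finset.mul_sum]
    _ ≤ b * ((n:ℝ)/(4*r)) := mul_le_mul_of_nonneg_left htotal hb0
  have hfinal : (T.card : ℝ) * (a * (1/(4*r))) + b * ((n:ℝ)/(4*r))
      ≤ 1 / γ * (a * k / n + b) := by
    have e1 : (T.card : ℝ) * (a * (1/(4*r))) ≤ a * k / (n * γ) := by
      have h1 : (T.card : ℝ) * (a * (1/(4*r))) ≤ (k:ℝ) * (a * (1/(4*r))) :=
        mul_le_mul_of_nonneg_right hcard (by positivity)
      have h2 : (k:ℝ) * (a * (1/(4*r))) = (a * k) / (4 * ((d:ℝ) * γ)) := by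
        rw [hr_def]; ring
      have h3 : (a * k) / (4 * ((d:ℝ) * γ)) ≤ (a * k) / ((n:ℝ) * γ) := by
        rw [div_le_div_iff₀ (by positivity) (by positivity)]
        nlinarith [mul_nonneg (mul_nonneg (mul_nonneg ha0 (Nat.cast_nonneg k)) hγ.le)
            (sub_nonneg.mpr hnd),
          mul_nonneg (mul_nonneg (mul_nonneg ha0 (Nat.cast_nonneg k)) hγ.le) hnR.le]
      calc (T.card : ℝ) * (a * (1/(4*r))) ≤ (k:ℝ) * (a * (1/(4*r))) := h1
      _ = (a * k) / (4 * ((d:ℝ) * γ)) := h2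
      _ ≤ (a * k) / ((n:ℝ) * γ) := h3
      _ = a * k / (n * γ) := rfl
    have e2 : b * ((n:ℝ)/(4*r)) ≤ b / γ := by
      rw [hr_def]
      have h2 : b * ((n:ℝ)/(4*((d:ℝ)*γ))) = (b * n)/(4*((d:ℝ)*γ)) := by ring
      rw [h2, div_le_div_iff₀ (by positivity) hγ]
      nlinarith [mul_nonneg (mul_nonneg hb0 (sub_nonneg.mpr hnd)) hγ.le,
        mul_nonneg (mul_nonneg hb0 hnR.le) hγ.le]
    have e3 : 1 / γ * (a * k / n + b) = a * k / (n * γ) + b / γ := by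
      field_simp
    linarith
  rw [← hsplit]
  calc (∑ i ∈ T, lam i * (∑ j, (W j i)^2))
        + (∑ i ∈ Finset.univ.filter (fun i : Fin d => ¬ (i:ℕ) < k),
            lam i * (∑ j, (W j i)^2))
      ≤ (T.card : ℝ) * (a * (1/(4*r))) + b * ((n:ℝ)/(4*r)) := add_le_add hhead htail
  _ ≤ 1 / γ * (a * k / n + b) := hfinal
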